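/- If a cube www (w nonempty) contains another cube xxx (x nonempty) as a factor, then either |x| = |w|, or x x first(x) is a factor of ww (the first two occurrences of w), or last(x) x x is a factor of the last two occurrences ww. -/

import Mathlib

lemma infix_take_of' {α : Type*} {s u t v : List α} {k : ℕ}
    (hv : s ++ u ++ t = v) (hk : s.length + u.length ≤ k) : u <:+: v.take k := by
  subst hv
  have h2 : (s ++ u).length ≤ k := by simp only [List.length_append]; omega
  have h1 : (s ++ u ++ t).take k = s ++ u ++ t.take (k - (s ++ u).length) := by
    rw [List.take_append, List.take_of_length_le h2, List.append_assoc]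
  rw [h1]
  exact ⟨s, t.take _, rfl⟩

lemma infix_drop_of' {α : Type*} {s u t v : List α} {k : ℕ}
    (hv : s ++ u ++ t = v) (hk : k ≤ s.length) : u <:+: v.drop k := by
  subst hv
  refine ⟨s.drop k, t, ?_⟩
  conv_rhs => rw [show s = s.take k ++ s.drop k from (List.take_append_drop k s).symm]
  rw [List.append_assoc (s.take k), List.append_assoc (s.take k),
      List.drop_left' (by rw [List.length_take]; omega)]

theorem stmt_9 {α : Type*} (w x : List α) (hw : w ≠ []) (hx : x ≠ [])
    (h : (x ++ x ++ x) <:+: (w ++ w ++ w)) :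
    x.length = w.length ∨
    (x ++ x ++ [x.head hx]) <:+: (w ++ w) ∨
    ([x.getLast hx] ++ x ++ x) <:+: (w ++ w) := by
  obtain ⟨s, t, hst⟩ := h
  have hm : 1 ≤ x.length := List.length_pos_iff.mpr hx
  have hn : 1 ≤ w.length := List.length_pos_iff.mpr hw
  have hlen : s.length + (x.length + x.length + x.length) + t.length
      = w.length + w.length + w.length := by
    have := congrArg List.length hst
    simp only [List.length_append] at this
    omega
  rcases eq_or_lt_of_le (show x.length ≤ w.length by omega) with heq | hmlt
  · exact Or.inl heq
  have hx2 : x.head hx :: x.tail = x := List.cons_head_tail hx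
  have hx1 : x.dropLast ++ [x.getLast hx] = x := List.dropLast_append_getLast hx
  by_cases hcase : s.length + (2 * x.length + 1) ≤ 2 * w.length
  · refine Or.inr (Or.inl ?_)
    have hdecomp : s ++ (x ++ x ++ [x.head hx]) ++ (x.tail ++ t) = w ++ w ++ w := by
      calc s ++ (x ++ x ++ [x.head hx]) ++ (x.tail ++ t)
          = s ++ (x ++ x ++ (x.head hx :: x.tail)) ++ t := by
            simp only [List.append_assoc, List.cons_append, List.singleton_append, List.nil_append]
        _ = s ++ (x ++ x ++ x) ++ t := by rw [hx2]
        _ = w ++ w ++ w := hst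
    have hinf := infix_take_of' hdecomp (k := w.length + w.length)
      (by simp only [List.length_append, List.length_singleton]; omega)
    rwa [show (w ++ w ++ w).take (w.length + w.length) = w ++ w from
      List.take_left' (by simp)] at hinf
  · refine Or.inr (Or.inr ?_)
    have hdecomp : (s ++ x.dropLast) ++ ([x.getLast hx] ++ x ++ x) ++ t
        = w ++ w ++ w := by
      calc (s ++ x.dropLast) ++ ([x.getLast hx] ++ x ++ x) ++ t
          = s ++ ((x.dropLast ++ [x.getLast hx]) ++ x ++ x) ++ t := by
            simp [List.append_assoc]
        _ = s ++ (x ++ x ++ x) ++ t := by rw [hx1]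
        _ = w ++ w ++ w := hst
    have hinf := infix_drop_of' hdecomp (k := w.length)
      (by simp only [List.length_append, List.length_dropLast]; omega)
    rwa [show (w ++ w ++ w).drop w.length = w ++ w from by
      rw [List.append_assoc, List.drop_left]] at hinf
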